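/- Fix 1 ≤ p ≤ q < ∞ and d ≥ 1. For j ≥ 1 define f_j : [0,1]^d → ℝ by f_j(x) = (1+p)^(1/p) 2^(j/p) max(0, 1 - 2^j x₁). Then each f_j is convex on [0,1]^d with ∫_{[0,1]^d} |f_j|^p dx ≤ 1, and there is a constant c > 0 depending only on p and q such that for all j < k, ∫_{[0,1]^d} |f_j - f_k|^q dx ≥ c. -/

import Mathlib

open MeasureTheory Set

lemma ftc (c r a b : ℝ) (hc : c ≠ 0) (hr : 1 ≤ r) :
    ∫ t in a..b, (1 - c*t) ^ r = ((1-c*a)^(r+1) - (1-c*b)^(r+1))/(c*(r+1)) := by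
  have hr1 : (1:ℝ) ≤ r + 1 := by linarith
  have hcont : Continuous fun t : ℝ => (1 - c*t) ^ r :=
    (Real.continuous_rpow_const (by linarith)).comp (by continuity)
  have hderiv : ∀ t ∈ Set.uIcc a b, HasDerivAt
      (fun t : ℝ => -(1 - c*t)^(r+1) / (c*(r+1))) ((1 - c*t) ^ r) t := by
    intro t _
    have h1 : HasDerivAt (fun t : ℝ => 1 - c*t) (-c) t := by
      simpa using ((hasDerivAt_id t).const_mul c).const_sub 1
    have h2 : HasDerivAt (fun t : ℝ => (1 - c*t)^(r+1))
        ((r+1) * (1 - c*t)^(r+1-1) * (-c)) t :=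
      (Real.hasDerivAt_rpow_const (Or.inr hr1)).comp t h1
    have h3 := (h2.neg).div_const (c*(r+1))
    refine h3.congr_deriv ?_
    have hr0 : r + 1 ≠ 0 := by positivity
    rw [add_sub_cancel_right]
    field_simp
  rw [intervalIntegral.integral_eq_sub_of_hasDerivAt hderiv
    (hcont.intervalIntegrable a b)]
  ring

lemma integral_pi_single {d : ℕ} (i0 : Fin d) (S : Fin d → Set ℝ) (g : ℝ → ℝ)
    (hS : ∀ i, i ≠ i0 → S i = Icc 0 1) (hm : MeasurableSet (S i0)) :
    ∫ x in Set.univ.pi S, g (x i0) = ∫ t in S i0, g t := by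
  have hms : ∀ i, MeasurableSet (S i) := by
    intro i
    by_cases h : i = i0
    · exact h ▸ hm
    · rw [hS i h]; exact measurableSet_Icc
  set F : Fin d → ℝ → ℝ := fun i => if i = i0 then (S i0).indicator g
    else (Icc 0 1).indicator (fun _ => (1:ℝ)) with hF
  have key : (Set.univ.pi S).indicator (fun x => g (x i0)) = fun x => ∏ i, F i (x i) := by
    funext x
    by_cases hx : x ∈ Set.univ.pi S
    · rw [Set.indicator_of_mem hx]
      have : ∀ i, F i (x i) = if i = i0 then g (x i0) else 1 := by
        intro i
        by_cases h : i = i0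
        · subst h; simp [hF, Set.indicator_of_mem (hx i (Set.mem_univ i))]
        · simp only [hF, h, if_false]
          rw [Set.indicator_of_mem]
          rw [← hS i h]; exact hx i (Set.mem_univ i)
      simp [this]
    · rw [Set.indicator_of_notMem hx]
      have hx' : ¬ ∀ i, x i ∈ S i := by
        intro h; exact hx fun i _ => h i
      push_neg at hx'
      obtain ⟨i, hi⟩ := hx'
      refine (Finset.prod_eq_zero (Finset.mem_univ i) ?_).symm
      by_cases h : i = i0
      · subst h; simp [hF, Set.indicator_of_notMem hi]
      · simp only [hF, h, if_false]
        rw [Set.indicator_of_notMem]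
        rw [← hS i h]; exact hi
  rw [← MeasureTheory.integral_indicator (MeasurableSet.univ_pi hms), key]
  beta_reduce
  rw [MeasureTheory.integral_fintype_prod_volume_eq_prod (ι := Fin d) (f := F)]
  rw [Finset.prod_eq_single i0 ?_ (by simp)]
  · simp [hF, MeasureTheory.integral_indicator hm]
  · intro i _ h
    simp only [hF, h, if_false]
    rw [MeasureTheory.integral_indicator measurableSet_Icc]
    simp [Real.volume_Icc]

lemma spike_integral (Cc r cc a b : ℝ) (hC : 0 ≤ Cc) (hr : 1 ≤ r) (hc : 0 < cc)
    (hab : a ≤ b) (hb : b ≤ cc⁻¹) :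
    ∫ t in Icc a b, |Cc * max 0 (1 - cc*t)| ^ r
      = Cc^r * (((1-cc*a)^(r+1) - (1-cc*b)^(r+1))/(cc*(r+1))) := by
  rw [MeasureTheory.integral_Icc_eq_integral_Ioc, ← intervalIntegral.integral_of_le hab]
  have heq : EqOn (fun t => |Cc * max 0 (1 - cc*t)| ^ r)
      (fun t => Cc^r * (1 - cc*t)^r) (Set.uIcc a b) := by
    intro t ht
    rw [Set.uIcc_of_le hab] at ht
    have hcb : cc * b ≤ 1 := by
      calc cc * b ≤ cc * cc⁻¹ := by nlinarith
      _ = 1 := mul_inv_cancel₀ hc.ne'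
    have h1 : 0 ≤ 1 - cc*t := by nlinarith [ht.2]
    simp only [max_eq_right h1]
    rw [abs_of_nonneg (by positivity), Real.mul_rpow hC h1]
  rw [intervalIntegral.integral_congr heq, intervalIntegral.integral_const_mul,
    ftc cc r a b hc.ne' hr]

lemma spike_integral_zero (Cc r cc a b : ℝ) (hr : r ≠ 0) (hc : 0 < cc) (ha : cc⁻¹ ≤ a) :
    ∫ t in Icc a b, |Cc * max 0 (1 - cc*t)| ^ r = 0 := by
  rw [MeasureTheory.setIntegral_congr_fun (g := fun _ => (0:ℝ)) measurableSet_Icc]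
  · simp
  · intro t ht
    have h1 : 1 - cc*t ≤ 0 := by
      have : 1 ≤ cc * t := by
        calc (1:ℝ) = cc * cc⁻¹ := (mul_inv_cancel₀ hc.ne').symm
        _ ≤ cc * t := by nlinarith [ht.1]
      linarith
    simp [max_eq_left h1, Real.zero_rpow hr]

lemma spike_cube (Cc r cc : ℝ) (hC : 0 ≤ Cc) (hr : 1 ≤ r) (hc1 : 1 ≤ cc) :
    ∫ t in Icc (0:ℝ) 1, |Cc * max 0 (1 - cc*t)| ^ r = Cc^r / (cc*(r+1)) := by
  have hc : 0 < cc := lt_of_lt_of_le one_pos hc1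
  have hm0 : 0 ≤ cc⁻¹ := by positivity
  have hm1 : cc⁻¹ ≤ 1 := by
    nlinarith [mul_inv_cancel₀ hc.ne']
  have hcont : Continuous fun t : ℝ => |Cc * max 0 (1 - cc*t)| ^ r := by
    apply (Real.continuous_rpow_const (by linarith)).comp
    exact (continuous_const.mul ((continuous_const.max
      (continuous_const.sub (continuous_const.mul continuous_id))))).abs
  rw [MeasureTheory.integral_Icc_eq_integral_Ioc,
    ← intervalIntegral.integral_of_le (by norm_num : (0:ℝ) ≤ 1),
    ← intervalIntegral.integral_add_adjacent_intervals (a := 0) (b := cc⁻¹) (c := 1)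
      (hcont.intervalIntegrable _ _) (hcont.intervalIntegrable _ _)]
  have h1 : ∫ t in (0:ℝ)..cc⁻¹, |Cc * max 0 (1 - cc*t)| ^ r
      = ∫ t in Icc (0:ℝ) cc⁻¹, |Cc * max 0 (1 - cc*t)| ^ r := by
    rw [intervalIntegral.integral_of_le hm0, MeasureTheory.integral_Icc_eq_integral_Ioc]
  have h2 : ∫ t in (cc⁻¹:ℝ)..1, |Cc * max 0 (1 - cc*t)| ^ r
      = ∫ t in Icc (cc⁻¹:ℝ) 1, |Cc * max 0 (1 - cc*t)| ^ r := by
    rw [intervalIntegral.integral_of_le hm1, MeasureTheory.integral_Icc_eq_integral_Ioc]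
  rw [h1, h2, spike_integral Cc r cc 0 cc⁻¹ hC hr hc hm0 le_rfl,
    spike_integral_zero Cc r cc cc⁻¹ 1 (by linarith) hc le_rfl]
  rw [mul_inv_cancel₀ hc.ne']
  simp [Real.zero_rpow (show r + 1 ≠ 0 by linarith), Real.one_rpow]
  rw [div_eq_mul_inv, mul_inv, mul_comm cc⁻¹]

lemma spike_half (Cc r cc : ℝ) (hC : 0 ≤ Cc) (hr : 1 ≤ r) (hc : 0 < cc) :
    ∫ t in Icc (cc⁻¹/2) cc⁻¹, |Cc * max 0 (1 - cc*t)| ^ r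
      = Cc^r * ((1/2:ℝ)^(r+1) / (cc*(r+1))) := by
  have hm0 : 0 < cc⁻¹ := by positivity
  rw [spike_integral Cc r cc (cc⁻¹/2) cc⁻¹ hC hr hc (by linarith) le_rfl]
  have e1 : cc * (cc⁻¹/2) = 1/2 := by field_simp
  have e2 : cc * cc⁻¹ = 1 := mul_inv_cancel₀ hc.ne'
  rw [e1, e2, sub_self, Real.zero_rpow (show r + 1 ≠ 0 by linarith)]
  norm_num

lemma cube_eq {d : ℕ} : Icc (0:Fin d→ℝ) 1 = Set.univ.pi (fun _ : Fin d => Icc (0:ℝ) 1) :=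
  (Set.pi_univ_Icc _ _).symm

lemma cube_integral {d : ℕ} (i0 : Fin d) (g : ℝ → ℝ) :
    ∫ x in Icc (0:Fin d→ℝ) 1, g (x i0) = ∫ t in Icc (0:ℝ) 1, g t := by
  rw [cube_eq, integral_pi_single i0 _ g (fun _ _ => rfl) measurableSet_Icc]

lemma box_integral {d : ℕ} (i0 : Fin d) (g : ℝ → ℝ) (a b : ℝ) :
    ∫ x in Set.univ.pi (fun i => if i = i0 then Icc a b else Icc (0:ℝ) 1), g (x i0)
      = ∫ t in Icc a b, g t := by
  rw [integral_pi_single i0 _ g (fun _ h => if_neg h) (by simp)]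
  simp

lemma spike_convex {d : ℕ} (i0 : Fin d) (Cc cc : ℝ) (hC : 0 ≤ Cc) :
    ConvexOn ℝ (Icc (0:Fin d→ℝ) 1) (fun x => Cc * max 0 (1 - cc * x i0)) := by
  have haff : ConvexOn ℝ (Icc (0:Fin d→ℝ) 1) (fun x => 1 - cc * x i0) := by
    refine ⟨convex_Icc _ _, fun x _ y _ a b ha hb hab => le_of_eq ?_⟩
    simp only [Pi.add_apply, Pi.smul_apply, smul_eq_mul]
    linear_combination -hab
  have hmax := (convexOn_const (0:ℝ) (convex_Icc _ _)).sup haff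
  have h2 := hmax.smul (c := Cc) hC
  exact h2


theorem stmt8 (p q : ℝ) (hp : 1 ≤ p) (hpq : p ≤ q) :
    (∀ (d : ℕ) (hd : 1 ≤ d) (f : ℕ → (Fin d → ℝ) → ℝ),
      (∀ j, f j = fun x => (1 + p) ^ (1/p) * 2 ^ ((j : ℝ)/p) *
        max 0 (1 - 2 ^ (j : ℝ) * x ⟨0, hd⟩)) →
      ∀ j, 1 ≤ j → ConvexOn ℝ (Icc (0 : Fin d → ℝ) 1) (f j) ∧
        (∫ x in Icc (0 : Fin d → ℝ) 1, |f j x| ^ p) ≤ 1) ∧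
    ∃ c : ℝ, 0 < c ∧
      ∀ (d : ℕ) (hd : 1 ≤ d) (f : ℕ → (Fin d → ℝ) → ℝ),
      (∀ j, f j = fun x => (1 + p) ^ (1/p) * 2 ^ ((j : ℝ)/p) *
        max 0 (1 - 2 ^ (j : ℝ) * x ⟨0, hd⟩)) →
      ∀ j k : ℕ, 1 ≤ j → j < k →
        c ≤ ∫ x in Icc (0 : Fin d → ℝ) 1, |f j x - f k x| ^ q := by
  have hp0 : 0 < p := by linarith
  have hq1 : 1 ≤ q := le_trans hp hpq
  have hq0 : 0 < q := by linarith
  constructor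
  · intro d hd f hf j hj
    have hC : (0:ℝ) ≤ (1 + p) ^ (1/p) * 2 ^ ((j : ℝ)/p) := by positivity
    have hc1 : (1:ℝ) ≤ (2:ℝ) ^ ((j:ℝ)) := by
      calc (1:ℝ) = (2:ℝ) ^ (0:ℝ) := (Real.rpow_zero 2).symm
      _ ≤ (2:ℝ) ^ ((j:ℝ)) := Real.rpow_le_rpow_of_exponent_le one_le_two (by positivity)
    constructor
    · rw [hf j]; exact spike_convex ⟨0,hd⟩ _ _ hC
    · simp only [hf]
      refine le_of_eq ?_
      refine (cube_integral (⟨0,hd⟩ : Fin d)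
        (fun t => |(1 + p) ^ (1/p) * 2 ^ ((j : ℝ)/p) * max 0 (1 - 2 ^ (j : ℝ) * t)| ^ p)).trans ?_
      rw [spike_cube _ p _ hC hp hc1,
        Real.mul_rpow (by positivity) (by positivity),
        ← Real.rpow_mul (by linarith : (0:ℝ) ≤ 1 + p),
        ← Real.rpow_mul (by norm_num : (0:ℝ) ≤ 2),
        one_div_mul_cancel hp0.ne', div_mul_cancel₀ _ hp0.ne', Real.rpow_one]
      rw [div_eq_one_iff_eq (by positivity)]
      ring
  · refine ⟨(1+p)^(1/p*q) * (1/2:ℝ)^(q+1) / (q+1), by positivity, ?_⟩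
    intro d hd f hf j k hj hjk
    simp only [hf]
    set i0 : Fin d := ⟨0, hd⟩ with hi0
    have hcj : (0:ℝ) < (2:ℝ)^((j:ℝ)) := by positivity
    have hc1 : (1:ℝ) ≤ (2:ℝ) ^ ((j:ℝ)) := by
      calc (1:ℝ) = (2:ℝ) ^ (0:ℝ) := (Real.rpow_zero 2).symm
      _ ≤ (2:ℝ) ^ ((j:ℝ)) := Real.rpow_le_rpow_of_exponent_le one_le_two (by positivity)
    have hm0 : (0:ℝ) < ((2:ℝ)^((j:ℝ)))⁻¹ := by positivity
    have hm1 : ((2:ℝ)^((j:ℝ)))⁻¹ ≤ 1 := by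
      nlinarith [mul_inv_cancel₀ hcj.ne', hm0.le]
    have hCj : (0:ℝ) ≤ (1 + p) ^ (1/p) * 2 ^ ((j : ℝ)/p) := by positivity
    have hck : (2:ℝ)^((j:ℝ)) * 2 ≤ (2:ℝ)^((k:ℝ)) := by
      have h1 : (2:ℝ)^((j:ℝ)+1) ≤ (2:ℝ)^((k:ℝ)) := by
        refine Real.rpow_le_rpow_of_exponent_le one_le_two ?_
        have : (j:ℝ) + 1 ≤ (k:ℝ) := by exact_mod_cast hjk
        linarith
      rw [Real.rpow_add_one (by norm_num : (2:ℝ) ≠ 0)] at h1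
      exact h1
    have hcont : Continuous (fun t : ℝ =>
        |(1 + p) ^ (1/p) * 2 ^ ((j : ℝ)/p) * max 0 (1 - 2 ^ (j : ℝ) * t)
          - (1 + p) ^ (1/p) * 2 ^ ((k : ℝ)/p) * max 0 (1 - 2 ^ (k : ℝ) * t)| ^ q) := by
      apply (Real.continuous_rpow_const (by linarith)).comp
      apply Continuous.abs
      exact (continuous_const.mul (continuous_const.max
          (continuous_const.sub (continuous_const.mul continuous_id)))).sub
        (continuous_const.mul (continuous_const.max
          (continuous_const.sub (continuous_const.mul continuous_id))))
    have hint : IntegrableOn (fun x : Fin d → ℝ =>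
        |(1 + p) ^ (1/p) * 2 ^ ((j : ℝ)/p) * max 0 (1 - 2 ^ (j : ℝ) * x i0)
          - (1 + p) ^ (1/p) * 2 ^ ((k : ℝ)/p) * max 0 (1 - 2 ^ (k : ℝ) * x i0)| ^ q)
        (Icc (0 : Fin d → ℝ) 1) volume :=
      ((hcont.comp (continuous_apply i0)).continuousOn).integrableOn_compact isCompact_Icc
    have hsub : (Set.univ.pi (fun i : Fin d =>
        if i = i0 then Icc (((2:ℝ)^((j:ℝ)))⁻¹/2) ((2:ℝ)^((j:ℝ)))⁻¹ else Icc (0:ℝ) 1))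
        ⊆ Icc (0 : Fin d → ℝ) 1 := by
      rw [cube_eq]
      refine Set.pi_mono fun i _ => ?_
      by_cases h : i = i0
      · rw [if_pos h]
        exact Set.Icc_subset_Icc (by positivity) hm1
      · rw [if_neg h]
    have mono := MeasureTheory.setIntegral_mono_set hint
      (Filter.Eventually.of_forall (fun x => by positivity))
      (HasSubset.Subset.eventuallyLE hsub)
    calc (1+p)^(1/p*q) * (1/2:ℝ)^(q+1) / (q+1)
        ≤ ∫ t in Icc (((2:ℝ)^((j:ℝ)))⁻¹/2) ((2:ℝ)^((j:ℝ)))⁻¹,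
            |(1 + p) ^ (1/p) * 2 ^ ((j : ℝ)/p) * max 0 (1 - 2 ^ (j : ℝ) * t)
              - (1 + p) ^ (1/p) * 2 ^ ((k : ℝ)/p) * max 0 (1 - 2 ^ (k : ℝ) * t)| ^ q := by
          rw [MeasureTheory.setIntegral_congr_fun (g := fun t =>
            |(1 + p) ^ (1/p) * 2 ^ ((j : ℝ)/p) * max 0 (1 - 2 ^ (j : ℝ) * t)| ^ q)
            measurableSet_Icc ?_]
          · rw [spike_half _ q _ hCj hq1 hcj,
              Real.mul_rpow (by positivity) (by positivity),
              ← Real.rpow_mul (by linarith : (0:ℝ) ≤ 1 + p),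
              ← Real.rpow_mul (by norm_num : (0:ℝ) ≤ 2)]
            have hBA : (2:ℝ)^((j:ℝ)) ≤ (2:ℝ)^((j:ℝ)/p*q) := by
              refine Real.rpow_le_rpow_of_exponent_le one_le_two ?_
              have h1 : (j:ℝ)/p*q = (j:ℝ)*(q/p) := by ring
              have h2 : (1:ℝ) ≤ q/p := (one_le_div hp0).mpr hpq
              have h3 := mul_le_mul_of_nonneg_left h2 (Nat.cast_nonneg (α := ℝ) j)
              rw [h1]; linarith
            have key : (1+p)^(1/p*q) * (1/2:ℝ)^(q+1) / (q+1)
                = (1+p)^(1/p*q) * (2:ℝ)^((j:ℝ)) * ((1/2:ℝ)^(q+1)/((2:ℝ)^((j:ℝ))*(q+1))) := by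
              field_simp
            rw [key]
            gcongr
          · intro t ht
            have e1 : ((2:ℝ)^((j:ℝ)) * 2) * (((2:ℝ)^((j:ℝ)))⁻¹/2) = 1 := by
              field_simp
            have h2 : (1:ℝ) ≤ (2:ℝ)^((k:ℝ)) * t := by
              calc (1:ℝ) = ((2:ℝ)^((j:ℝ)) * 2) * (((2:ℝ)^((j:ℝ)))⁻¹/2) := e1.symm
              _ ≤ (2:ℝ)^((k:ℝ)) * t := mul_le_mul hck ht.1 (by positivity) (by positivity)
            have h1 : 1 - (2:ℝ)^((k:ℝ)) * t ≤ 0 := by linarith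
            simp only [max_eq_left h1, mul_zero, sub_zero]
        _ = ∫ x in (Set.univ.pi (fun i : Fin d =>
              if i = i0 then Icc (((2:ℝ)^((j:ℝ)))⁻¹/2) ((2:ℝ)^((j:ℝ)))⁻¹ else Icc (0:ℝ) 1)),
            |(1 + p) ^ (1/p) * 2 ^ ((j : ℝ)/p) * max 0 (1 - 2 ^ (j : ℝ) * x i0)
              - (1 + p) ^ (1/p) * 2 ^ ((k : ℝ)/p) * max 0 (1 - 2 ^ (k : ℝ) * x i0)| ^ q :=
          (box_integral i0 _ _ _).symm
        _ ≤ _ := mono
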